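/- arXiv:1701.05820 — 3 statements merged into one kernel-verified Lean document; each statement's English description precedes it below -/
import Mathlib

section
/- Let $n \ge 2$ be even and let $a, b \in \mathbb{R}^n$ be unit vectors. Then there exists an orthogonal matrix $L \in O(n)$ such that $La = b$ and such that for every symmetric $n \times n$ real matrix $A$ one has $\sum_{i,k=1}^{n} L_{ki} A_{ki} = (a \cdot b)\, \mathrm{tr}(A)$; in particular, if $\mathrm{tr}(A) = 0$ then $\sum_{i,k} L_{ki} A_{ki} = 0$. -/
open scoped RealInnerProductSpace

namespace OrthContraction

variable {n : ℕ}

/-- the pairing involution `2k ↔ 2k+1` on `Fin n` for even `n`. -/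
def pairFn (hne : n % 2 = 0) (i : Fin n) : Fin n :=
  if h : i.val % 2 = 0 then ⟨i.val + 1, by have := i.2; omega⟩
  else ⟨i.val - 1, by have := i.2; omega⟩

lemma pairFn_val (hne : n % 2 = 0) (i : Fin n) :
    (pairFn hne i).val = if i.val % 2 = 0 then i.val + 1 else i.val - 1 := by
  unfold pairFn; split_ifs <;> rfl

lemma pairFn_pairFn (hne : n % 2 = 0) (i : Fin n) : pairFn hne (pairFn hne i) = i := by
  have h1 := pairFn_val hne i
  have h2 := pairFn_val hne (pairFn hne i)
  have := i.2
  apply Fin.ext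
  split_ifs at h1 h2 <;> omega

lemma pairFn_bij (hne : n % 2 = 0) : Function.Bijective (pairFn hne) :=
  Function.Involutive.bijective (pairFn_pairFn hne)

/-- sign pattern -/
def sgn (i : Fin n) : ℝ := if i.val % 2 = 0 then -1 else 1

lemma sgn_pairFn (hne : n % 2 = 0) (i : Fin n) : sgn (pairFn hne i) = - sgn i := by
  have h1 := pairFn_val hne i
  unfold sgn
  split_ifs with h2 h3 <;> split_ifs at h1 <;> first | omega | norm_num

lemma sgn_mul_self (i : Fin n) : sgn i * sgn i = 1 := by
  unfold sgn; split_ifs <;> norm_num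

/-- the standard complex structure as a linear map on Euclidean space. -/
def Jmap (hne : n % 2 = 0) :
    EuclideanSpace ℝ (Fin n) →ₗ[ℝ] EuclideanSpace ℝ (Fin n) where
  toFun x := WithLp.toLp 2 (fun i => sgn i * x (pairFn hne i))
  map_add' x y := by ext i; simp [mul_add]
  map_smul' r x := by ext i; simp; ring

lemma Jmap_apply (hne : n % 2 = 0) (x : EuclideanSpace ℝ (Fin n)) (i : Fin n) :
    Jmap hne x i = sgn i * x (pairFn hne i) := rfl

lemma Jmap_inner_Jmap (hne : n % 2 = 0) (x y : EuclideanSpace ℝ (Fin n)) :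
    ⟪Jmap hne x, Jmap hne y⟫ = ⟪x, y⟫ := by
  rw [← real_inner_comm (Jmap hne x) (Jmap hne y), ← real_inner_comm x y]
  simp only [PiLp.inner_apply, RCLike.inner_apply, starRingEnd_apply, star_trivial,
    Jmap_apply]
  calc ∑ i, sgn i * x (pairFn hne i) * (sgn i * y (pairFn hne i))
      = ∑ i, x (pairFn hne i) * y (pairFn hne i) := by
        refine Finset.sum_congr rfl fun i _ => ?_
        calc sgn i * x (pairFn hne i) * (sgn i * y (pairFn hne i))
            = (sgn i * sgn i) * (x (pairFn hne i) * y (pairFn hne i)) := by ring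
          _ = x (pairFn hne i) * y (pairFn hne i) := by rw [sgn_mul_self, one_mul]
    _ = ∑ i, x i * y i :=
        Fintype.sum_bijective _ (pairFn_bij hne)
          (fun i => x (pairFn hne i) * y (pairFn hne i)) (fun i => x i * y i) (fun i => rfl)

lemma Jmap_inner_skew (hne : n % 2 = 0) (x y : EuclideanSpace ℝ (Fin n)) :
    ⟪Jmap hne x, y⟫ = - ⟪x, Jmap hne y⟫ := by
  rw [← real_inner_comm (Jmap hne x) y, ← real_inner_comm x (Jmap hne y)]
  simp only [PiLp.inner_apply, RCLike.inner_apply, starRingEnd_apply, star_trivial,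
    Jmap_apply]
  have h := Fintype.sum_bijective _ (pairFn_bij hne)
    (fun j => sgn (pairFn hne j) * x (pairFn hne (pairFn hne j)) * y (pairFn hne j))
    (fun i => sgn i * x (pairFn hne i) * y i) (fun i => rfl)
  rw [← h, ← Finset.sum_neg_distrib]
  refine Finset.sum_congr rfl fun i _ => ?_
  beta_reduce
  rw [sgn_pairFn hne i, pairFn_pairFn hne i]
  ring

lemma Jmap_single (hn : 2 ≤ n) (hne : n % 2 = 0) :
    Jmap hne (EuclideanSpace.single (⟨0, by omega⟩ : Fin n) (1:ℝ)) =
      EuclideanSpace.single (⟨1, by omega⟩ : Fin n) (1:ℝ) := by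
  ext i
  rw [Jmap_apply]
  simp only [EuclideanSpace.single_apply]
  have hv := pairFn_val hne i
  have h2 := i.2
  by_cases h : i = (⟨1, by omega⟩ : Fin n)
  · have hival : i.val = 1 := by rw [h]
    have hp : pairFn hne i = (⟨0, by omega⟩ : Fin n) := by
      apply Fin.ext
      rw [hv, hival]; norm_num
    rw [if_pos hp, if_pos h]
    simp [sgn, hival]
  · have hp : pairFn hne i ≠ (⟨0, by omega⟩ : Fin n) := by
      intro hc
      apply h
      have := congrArg Fin.val hc
      rw [hv] at this
      apply Fin.ext
      simp at this ⊢
      split_ifs at this <;> omega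
    rw [if_neg hp, if_neg h, mul_zero]

lemma matrix_part (a b : EuclideanSpace ℝ (Fin n)) (c : ℝ)
    (g : EuclideanSpace ℝ (Fin n) →ₗ[ℝ] EuclideanSpace ℝ (Fin n)) (hg1 : g a = b)
    (hg2 : ∀ x y, ⟪g x, g y⟫ = ⟪x, y⟫)
    (hg3 : ∀ x y, ⟪g x, y⟫ + ⟪x, g y⟫ = 2 * c * ⟪x, y⟫) :
    ∃ L : Matrix (Fin n) (Fin n) ℝ, L ∈ Matrix.orthogonalGroup (Fin n) ℝ ∧
      Matrix.toEuclideanLin L a = b ∧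
      ∀ A : Matrix (Fin n) (Fin n) ℝ, A.IsSymm →
        ∑ k, ∑ i, L k i * A k i = c * A.trace := by
  classical
  set L : Matrix (Fin n) (Fin n) ℝ :=
    Matrix.of fun k i => g (EuclideanSpace.single i 1) k with hLdef
  have hent : ∀ k i, L k i = g (EuclideanSpace.single i 1) k := fun k i => rfl
  have hLg : Matrix.toEuclideanLin L = g := by
    apply Module.Basis.ext (EuclideanSpace.basisFun (Fin n) ℝ).toBasis
    intro i
    have hbi : ((EuclideanSpace.basisFun (Fin n) ℝ).toBasis : Fin n → EuclideanSpace ℝ (Fin n)) i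
        = EuclideanSpace.single i 1 := by
      simp [EuclideanSpace.basisFun]
      rfl
    rw [hbi]
    have e2 : (WithLp.equiv 2 (Fin n → ℝ)) (EuclideanSpace.single i (1:ℝ)) = Pi.single i 1 :=
      EuclideanSpace.ofLp_single i 1
    ext k
    rw [Matrix.toEuclideanLin_apply, EuclideanSpace.ofLp_single, Matrix.mulVec_single]
    simp [hent]
  have hinner : ∀ (i k : Fin n),
      ⟪(EuclideanSpace.single i (1:ℝ) : EuclideanSpace ℝ (Fin n)), EuclideanSpace.single k 1⟫
        = if i = k then (1:ℝ) else 0 := by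
    intro i k
    rw [EuclideanSpace.inner_single_left]
    simp [EuclideanSpace.single_apply]
  refine ⟨L, ?_, ?_, ?_⟩
  · rw [Matrix.mem_orthogonalGroup_iff']
    ext i k
    rw [Matrix.mul_apply, Matrix.one_apply]
    have : ∀ j, (star L) i j * L j k
        = g (EuclideanSpace.single i 1) j * g (EuclideanSpace.single k 1) j := by
      intro j
      simp [Matrix.star_apply, hent]
    show ∑ j, (star L) i j * L j k = _
    rw [Finset.sum_congr rfl fun j _ => this j]
    have h2 := hg2 (EuclideanSpace.single i 1) (EuclideanSpace.single k 1)
    rw [hinner i k] at h2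
    rw [← h2]
    simp [PiLp.inner_apply, RCLike.inner_apply, mul_comm]
  · rw [hLg, hg1]
  · intro A hA
    have hsum : ∀ k i, L k i + L i k = 2 * c * (if i = k then 1 else 0) := by
      intro k i
      have h3 := hg3 (EuclideanSpace.single i 1) (EuclideanSpace.single k 1)
      rw [hinner i k] at h3
      rw [EuclideanSpace.inner_single_right, EuclideanSpace.inner_single_left] at h3
      simpa [hent] using h3
    have hswap : (∑ k, ∑ i, L k i * A k i) = ∑ k, ∑ i, L i k * A k i := by
      rw [Finset.sum_comm]
      exact Finset.sum_congr rfl fun i _ => Finset.sum_congr rfl fun k _ => by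
        rw [hA.apply i k]
    have key : (∑ k, ∑ i, L k i * A k i) + (∑ k, ∑ i, L k i * A k i) = 2 * c * A.trace := by
      calc (∑ k, ∑ i, L k i * A k i) + (∑ k, ∑ i, L k i * A k i)
          = (∑ k, ∑ i, L k i * A k i) + (∑ k, ∑ i, L i k * A k i) :=
            congrArg (fun t => (∑ k, ∑ i, L k i * A k i) + t) hswap
        _ = ∑ k, ∑ i, (L k i + L i k) * A k i := by
            rw [← Finset.sum_add_distrib]
            exact Finset.sum_congr rfl fun k _ => by
              rw [← Finset.sum_add_distrib]
              exact Finset.sum_congr rfl fun i _ => by ring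
        _ = ∑ k, 2 * c * A k k := by
            refine Finset.sum_congr rfl fun k _ => ?_
            rw [Finset.sum_congr rfl fun i (_ : i ∈ Finset.univ) => by rw [hsum k i]]
            simp [ite_mul, Finset.sum_ite_eq' Finset.univ k (fun i => 2 * c * A k i)]
        _ = 2 * c * A.trace := by
            rw [Matrix.trace, Finset.mul_sum]
            rfl
    linarith

end OrthContraction

open OrthContraction in
/-- For `n ≥ 2` even and unit vectors `a, b ∈ ℝⁿ`, there is an orthogonal matrix `L ∈ O(n)` with
`La = b` and `∑_{i,k} L_{ki} A_{ki} = (a·b) tr A` for every symmetric matrix `A`; in particular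
the sum vanishes for trace-free symmetric `A`. -/
theorem exists_orthogonal_contraction
    {n : ℕ} (hn : 2 ≤ n) (hne : Even n)
    (a b : EuclideanSpace ℝ (Fin n)) (ha : ‖a‖ = 1) (hb : ‖b‖ = 1) :
    ∃ L : Matrix (Fin n) (Fin n) ℝ, L ∈ Matrix.orthogonalGroup (Fin n) ℝ ∧
      Matrix.toEuclideanLin L a = b ∧
      ∀ A : Matrix (Fin n) (Fin n) ℝ, A.IsSymm →
        ∑ k, ∑ i, L k i * A k i = ⟪a, b⟫ * A.trace := by
  classical
  have hne2 : n % 2 = 0 := Nat.even_iff.mp hne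
  set c : ℝ := ⟪a, b⟫ with hc
  have habs : |c| ≤ 1 := by
    have := abs_real_inner_le_norm a b
    rwa [ha, hb, one_mul] at this
  have hc2 : c ^ 2 ≤ 1 := by
    have := pow_le_pow_left₀ (abs_nonneg c) habs 2
    simpa [sq_abs] using this
  have hnorm_sub : ‖b - c • a‖ ^ 2 = 1 - c ^ 2 := by
    rw [norm_sub_sq_real, norm_smul, real_inner_smul_right, ha, hb]
    have : ⟪b, a⟫ = c := by rw [hc, real_inner_comm]
    rw [this]
    simp [abs_mul]
    nlinarith [sq_abs c]
  by_cases hdeg : c ^ 2 = 1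
  · -- degenerate case : b = c • a
    have hb' : b = c • a := by
      have h0 : ‖b - c • a‖ ^ 2 = 0 := by rw [hnorm_sub, hdeg]; ring
      have := pow_eq_zero_iff (n := 2) (by norm_num) |>.mp h0
      rw [norm_eq_zero, sub_eq_zero] at this
      exact this
    refine matrix_part a b c (c • (LinearMap.id)) ?_ ?_ ?_
    · simp [hb']
    · intro x y
      simp only [LinearMap.smul_apply, LinearMap.id_coe, id_eq]
      rw [real_inner_smul_left, real_inner_smul_right, ← mul_assoc]
      have hcc : c * c = 1 := by nlinarith [hdeg]
      rw [hcc, one_mul]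
    · intro x y
      simp only [LinearMap.smul_apply, LinearMap.id_coe, id_eq]
      rw [real_inner_smul_left, real_inner_smul_right]
      ring
  · have hlt : c ^ 2 < 1 := lt_of_le_of_ne hc2 hdeg
    set s : ℝ := Real.sqrt (1 - c ^ 2) with hs
    have hs2 : s ^ 2 = 1 - c ^ 2 := Real.sq_sqrt (by linarith)
    have hspos : 0 < s := Real.sqrt_pos.mpr (by linarith)
    set u : EuclideanSpace ℝ (Fin n) := s⁻¹ • (b - c • a) with hu
    have hbca_norm : ‖b - c • a‖ = s := by
      rw [← Real.sqrt_sq (norm_nonneg (b - c • a)), hnorm_sub]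
    have hu1 : ‖u‖ = 1 := by
      rw [hu, norm_smul, hbca_norm, Real.norm_eq_abs, abs_inv, abs_of_pos hspos]
      field_simp
    have hau : ⟪a, u⟫ = 0 := by
      rw [hu, real_inner_smul_right, inner_sub_right, real_inner_smul_right,
        real_inner_self_eq_norm_sq, ha, ← hc]
      ring
    have hua : ⟪u, a⟫ = 0 := by rw [real_inner_comm]; exact hau
    have huu : ⟪u, u⟫ = 1 := by rw [real_inner_self_eq_norm_sq, hu1]; norm_num
    have haa : ⟪a, a⟫ = 1 := by rw [real_inner_self_eq_norm_sq, ha]; norm_num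
    set i0 : Fin n := ⟨0, by omega⟩ with hi0
    set i1 : Fin n := ⟨1, by omega⟩ with hi1
    have hi01 : i1 ≠ i0 := by
      intro hcon
      have := congrArg Fin.val hcon
      simp [hi0, hi1] at this
    set v : Fin n → EuclideanSpace ℝ (Fin n) := fun i => if i = i0 then a else u with hv
    have hvo : Orthonormal ℝ (({i0, i1} : Set (Fin n)).restrict v) := by
      rw [orthonormal_iff_ite]
      rintro ⟨i, hi⟩ ⟨j, hj⟩
      simp only [Set.restrict_apply, Subtype.mk.injEq]
      rcases hi with rfl | hi
      · rcases hj with rfl | hj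
        · simp [hv, haa, Set.restrict, ha]
        · rw [Set.mem_singleton_iff] at hj
          subst hj
          simp [hv, hi01, hau, (Ne.symm hi01), Set.restrict]
      · rw [Set.mem_singleton_iff] at hi
        subst hi
        rcases hj with rfl | hj
        · simp [hv, hi01, hua, Set.restrict]
        · rw [Set.mem_singleton_iff] at hj
          subst hj
          simp [hv, hi01, huu, Set.restrict, hu1]
    have hcard : Module.finrank ℝ (EuclideanSpace ℝ (Fin n)) = Fintype.card (Fin n) := by
      simp [finrank_euclideanSpace]
    obtain ⟨B, hB⟩ := hvo.exists_orthonormalBasis_extension_of_card_eq hcard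
    have hBa : B i0 = a := by
      have := hB i0 (by left; rfl)
      simpa [hv] using this
    have hBu : B i1 = u := by
      have := hB i1 (by right; rfl)
      simpa [hv, hi01] using this
    set Jp : EuclideanSpace ℝ (Fin n) →ₗ[ℝ] EuclideanSpace ℝ (Fin n) :=
      (B.repr.symm.toLinearEquiv.toLinearMap).comp
        ((Jmap hne2).comp B.repr.toLinearEquiv.toLinearMap) with hJpdef
    have hJp : ∀ x, Jp x = B.repr.symm (Jmap hne2 (B.repr x)) := fun x => rfl
    have hJJ : ∀ x y, ⟪Jp x, Jp y⟫ = ⟪x, y⟫ := by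
      intro x y
      rw [hJp, hJp, LinearIsometryEquiv.inner_map_map, Jmap_inner_Jmap,
        LinearIsometryEquiv.inner_map_map]
    have hJskew : ∀ x y, ⟪Jp x, y⟫ = - ⟪x, Jp y⟫ := by
      intro x y
      have e1 : ⟪Jp x, y⟫ = ⟪Jmap hne2 (B.repr x), B.repr y⟫ := by
        rw [hJp, ← B.repr.symm_apply_apply y, LinearIsometryEquiv.inner_map_map,
          B.repr.symm_apply_apply]
      have e2 : ⟪x, Jp y⟫ = ⟪B.repr x, Jmap hne2 (B.repr y)⟫ := by
        rw [hJp, ← B.repr.symm_apply_apply x, LinearIsometryEquiv.inner_map_map,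
          B.repr.symm_apply_apply]
      rw [e1, e2, Jmap_inner_skew]
    set g : EuclideanSpace ℝ (Fin n) →ₗ[ℝ] EuclideanSpace ℝ (Fin n) :=
      c • LinearMap.id + s • Jp with hgdef
    have hgx : ∀ x, g x = c • x + s • Jp x := fun x => rfl
    have hJpa : Jp a = u := by
      rw [hJp, ← hBa, OrthonormalBasis.repr_self]
      have : Jmap hne2 (EuclideanSpace.single i0 (1:ℝ)) = EuclideanSpace.single i1 1 :=
        Jmap_single hn hne2
      rw [this, ← hBu, ← OrthonormalBasis.repr_self B i1, B.repr.symm_apply_apply]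
    refine matrix_part a b c g ?_ ?_ ?_
    · rw [hgx, hJpa, hu, smul_smul, mul_inv_cancel₀ (ne_of_gt hspos), one_smul]
      abel
    · intro x y
      rw [hgx, hgx]
      simp only [inner_add_left, inner_add_right, real_inner_smul_left,
        real_inner_smul_right, hJJ]
      rw [hJskew x y]
      linear_combination (⟪x, y⟫ : ℝ) * hs2
    · intro x y
      rw [hgx, hgx]
      simp only [inner_add_left, inner_add_right, real_inner_smul_left,
        real_inner_smul_right]
      rw [hJskew x y]
      ring
end

section
/- Let $n \ge 2$, let $u$ be three times continuously differentiable on a neighborhood of $x \in \mathbb{R}^n$ with $Du(x) \ne 0$, and let $a > 0$. Suppose there exist constants $C \ge 0$ and $r > 0$ such that for every $y$ with $|y - x| \le r$ and $u(y) = u(x)$ one has $(Du(y) - Du(x)) \cdot (y - x) + a|y - x|^2 \le C|y - x|^3$. Then $\min \{ -v^{T} D^2u(x)\, v : v \in \mathbb{R}^n,\ |v| = 1,\ v \cdot Du(x) = 0 \} \ge a$; that is, $|Du(x)|\,\kappa_1(x) \ge a$, where $\kappa_1(x)$ is the smallest principal curvature of the level set of $u$ through $x$. -/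
open scoped RealInnerProductSpace
open Metric

lemma taylor_bound' {E F : Type*} [NormedAddCommGroup E] [NormedSpace ℝ E]
    [NormedAddCommGroup F] [NormedSpace ℝ F]
    (f : E → F) (x : E) (δ : ℝ) (K : ℝ)
    (hdiff : ∀ z ∈ closedBall x δ, DifferentiableAt ℝ f z)
    (hlip : ∀ z ∈ closedBall x δ, ‖fderiv ℝ f z - fderiv ℝ f x‖ ≤ K * ‖z - x‖)
    (y : E) (hy : y ∈ closedBall x δ) (hK : 0 ≤ K) :
    ‖f y - f x - fderiv ℝ f x (y - x)‖ ≤ K * ‖y - x‖ ^ 2 := by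
  set L := fderiv ℝ f x with hL
  have hsub : closedBall x ‖y - x‖ ⊆ closedBall x δ := by
    apply closedBall_subset_closedBall
    rw [← dist_eq_norm]; exact mem_closedBall.1 hy
  set φ : E → F := fun z => f z - L z with hφ
  have hφdiff : ∀ z ∈ closedBall x ‖y - x‖, DifferentiableAt ℝ φ z := fun z hz =>
    (hdiff z (hsub hz)).sub (L.differentiableAt)
  have hφd : ∀ z ∈ closedBall x ‖y - x‖, fderiv ℝ φ z = fderiv ℝ f z - L := by
    intro z hz
    rw [hφ, fderiv_fun_sub (hdiff z (hsub hz)) L.differentiableAt, L.fderiv]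
  have hbound : ∀ z ∈ closedBall x ‖y - x‖, ‖fderiv ℝ φ z‖ ≤ K * ‖y - x‖ := by
    intro z hz
    rw [hφd z hz]
    calc ‖fderiv ℝ f z - L‖ ≤ K * ‖z - x‖ := hlip z (hsub hz)
      _ ≤ K * ‖y - x‖ := by
          apply mul_le_mul_of_nonneg_left _ hK
          rw [← dist_eq_norm]; exact mem_closedBall.1 hz
  have key := Convex.norm_image_sub_le_of_norm_fderiv_le hφdiff hbound
    (convex_closedBall x ‖y - x‖) (mem_closedBall_self (norm_nonneg _))
    (by rw [mem_closedBall, dist_eq_norm])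
  have heq : φ y - φ x = f y - f x - L (y - x) := by
    simp only [hφ, map_sub]; abel
  rw [heq] at key
  calc ‖f y - f x - L (y - x)‖ ≤ K * ‖y - x‖ * ‖y - x‖ := key
    _ = K * ‖y - x‖ ^ 2 := by ring

lemma arith_key (t s N a C K₂ nH M Hvv Hve Hev Hee P A B : ℝ)
    (ht : 0 < t) (hs : |s| ≤ M*t^2) (hMt : M*t ≤ 1) (hM0 : 0 ≤ M)
    (hNlo : t ≤ N) (hNup : N ≤ 2*t)
    (hC : 0 ≤ C) (hK₂ : 0 ≤ K₂) (hnH0 : 0 ≤ nH)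
    (hhyp : (A - B) + a*N^2 ≤ C*N^3)
    (hT2 : |A - B - P| ≤ K₂ * N^3)
    (hP : P = t^2*Hvv + (t*s)*Hve + (s*t)*Hev + s^2*Hee)
    (hve : |Hve| ≤ nH) (hev : |Hev| ≤ nH) (hee : |Hee| ≤ nH)
    (ha : 0 < a) :
    Hvv + a ≤ (8*C + 8*K₂ + 3*nH*M) * t := by
  have hN0 : 0 < N := lt_of_lt_of_le ht hNlo
  have hs0 : 0 ≤ M*t^2 := le_trans (abs_nonneg s) hs
  have hts : |t*s| ≤ M*t^3 := by
    rw [abs_mul, abs_of_pos ht]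
    calc t * |s| ≤ t * (M*t^2) := mul_le_mul_of_nonneg_left hs ht.le
      _ = M*t^3 := by ring
  have hs2 : s^2 ≤ M*t^3 := by
    have h1 : s^2 = |s|^2 := (sq_abs s).symm
    have h2 : |s|^2 ≤ (M*t^2)^2 := pow_le_pow_left₀ (abs_nonneg _) hs 2
    have h3 : (M*t^2)^2 = (M*t)*(M*t^3) := by ring
    have h4 : (M*t)*(M*t^3) ≤ 1*(M*t^3) :=
      mul_le_mul_of_nonneg_right hMt (by positivity)
    nlinarith
  have hc1 : |(t*s)*Hve| ≤ M*t^3*nH := by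
    rw [abs_mul]
    exact mul_le_mul hts hve (abs_nonneg _) (by positivity)
  have hc2 : |(s*t)*Hev| ≤ M*t^3*nH := by
    rw [abs_mul, mul_comm s t]
    exact mul_le_mul hts hev (abs_nonneg _) (by positivity)
  have hc3 : |s^2*Hee| ≤ M*t^3*nH := by
    rw [abs_mul, abs_of_nonneg (sq_nonneg s)]
    exact mul_le_mul hs2 hee (abs_nonneg _) (by positivity)
  have hPlow : t^2*Hvv - 3*nH*M*t^3 ≤ P := by
    have := abs_le.1 hc1
    have := abs_le.1 hc2
    have := abs_le.1 hc3
    rw [hP]; nlinarith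
  have hAB : A - B ≥ P - K₂*N^3 := by
    have := abs_le.1 hT2
    linarith [this.1]
  have hN3 : N^3 ≤ 8*t^3 := by nlinarith [pow_le_pow_left₀ hN0.le hNup 3]
  have haN : a*t^2 ≤ a*N^2 := by
    have h := pow_le_pow_left₀ ht.le hNlo 2
    exact mul_le_mul_of_nonneg_left h ha.le
  have hmain : (Hvv + a) * t^2 ≤ ((8*C + 8*K₂ + 3*nH*M) * t) * t^2 := by
    have hCN : C*N^3 ≤ C*(8*t^3) := mul_le_mul_of_nonneg_left hN3 hC
    have hKN : K₂*N^3 ≤ K₂*(8*t^3) := mul_le_mul_of_nonneg_left hN3 hK₂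
    have hT2b := (abs_le.1 hT2).2
    linarith [hPlow, hhyp, haN, hT2b, hCN, hKN]
  exact le_of_mul_le_mul_right hmain (by positivity)

set_option maxHeartbeats 4000000 in
/-- If `u` is `C³` near `x` with `Du(x) ≠ 0`, `a > 0`, and
`(Du(y) - Du(x))·(y - x) + a|y-x|² ≤ C|y-x|³` for all nearby `y` on the level set of `x`, then
`min { -vᵀ D²u(x) v : |v| = 1, v ⊥ Du(x) } ≥ a`, i.e. `|Du(x)| κ₁(x) ≥ a`. -/
theorem curvature_lower_bound_of_two_point_estimate
    {n : ℕ} (hn : 2 ≤ n)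
    (u : EuclideanSpace ℝ (Fin n) → ℝ)
    (W : Set (EuclideanSpace ℝ (Fin n))) (hW : IsOpen W)
    (x : EuclideanSpace ℝ (Fin n)) (hxW : x ∈ W)
    (hu : ContDiffOn ℝ 3 u W)
    (hgrad : gradient u x ≠ 0)
    (a : ℝ) (ha : 0 < a)
    (C r : ℝ) (hC : 0 ≤ C) (hr : 0 < r) (hball : Metric.closedBall x r ⊆ W)
    (hyp : ∀ y, ‖y - x‖ ≤ r → u y = u x →
      ⟪gradient u y - gradient u x, y - x⟫ + a * ‖y - x‖ ^ 2 ≤ C * ‖y - x‖ ^ 3) :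
    a ≤ sInf {s : ℝ | ∃ v : EuclideanSpace ℝ (Fin n), ‖v‖ = 1 ∧ ⟪v, gradient u x⟫ = 0 ∧
      s = -(fderiv ℝ (fun y => fderiv ℝ u y v) x v)} := by
  classical
  have hbridge : ∀ (y w : EuclideanSpace ℝ (Fin n)), ⟪gradient u y, w⟫ = fderiv ℝ u y w := by
    intro y w
    rw [gradient]
    exact InnerProductSpace.toDual_symm_apply
  set g := gradient u x with hgdef
  clear_value g
  have hG : (0:ℝ) < ‖g‖ := norm_pos_iff.2 hgrad
  -- a unit vector orthogonal to the gradient exists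
  have hexv : ∃ v : EuclideanSpace ℝ (Fin n), ‖v‖ = 1 ∧ ⟪v, g⟫ = 0 := by
    have hbot : (ℝ ∙ g)ᗮ ≠ ⊥ := by
      intro h
      have h1 : Module.finrank ℝ (ℝ ∙ g) + Module.finrank ℝ (ℝ ∙ g)ᗮ
          = Module.finrank ℝ (EuclideanSpace ℝ (Fin n)) :=
        Submodule.finrank_add_finrank_orthogonal _
      rw [h, finrank_span_singleton hgrad, finrank_euclideanSpace_fin] at h1
      have h2 : Module.finrank ℝ (⊥ : Submodule ℝ (EuclideanSpace ℝ (Fin n))) = 0 := by simp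
      rw [h2] at h1
      omega
    obtain ⟨w, hwmem, hw0⟩ := Submodule.exists_mem_ne_zero_of_ne_bot hbot
    refine ⟨‖w‖⁻¹ • w, ?_, ?_⟩
    · rw [norm_smul, norm_inv, norm_norm, inv_mul_cancel₀ (norm_ne_zero_iff.2 hw0)]
    · have hwg : ⟪g, w⟫ = 0 := (Submodule.mem_orthogonal _ _).1 hwmem g
        (Submodule.mem_span_singleton_self g)
      rw [real_inner_smul_left, real_inner_comm, hwg, mul_zero]
  -- regularity facts
  have hcd : ∀ y ∈ W, ContDiffAt ℝ 3 u y := fun y hy => hu.contDiffAt (hW.mem_nhds hy)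
  have hdiff : ∀ y ∈ W, DifferentiableAt ℝ u y := fun y hy =>
    (hcd y hy).differentiableAt (by norm_num)
  have hf1 : ∀ y ∈ W, ContDiffAt ℝ 2 (fderiv ℝ u) y := fun y hy =>
    (hcd y hy).fderiv_right (by norm_num)
  have hdiff' : ∀ y ∈ W, DifferentiableAt ℝ (fderiv ℝ u) y := fun y hy =>
    (hf1 y hy).differentiableAt (by norm_num)
  have hf2 : ContDiffAt ℝ 1 (fderiv ℝ (fderiv ℝ u)) x := (hf1 x hxW).fderiv_right (by norm_num)
  obtain ⟨K₁, t₁, ht₁, hlip₁⟩ := ((hf1 x hxW).of_le (by norm_num)).exists_lipschitzOnWith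
  obtain ⟨K₂, t₂, ht₂, hlip₂⟩ := hf2.exists_lipschitzOnWith
  -- choose a good radius δ
  obtain ⟨ε, hε0, hεsub⟩ := Metric.mem_nhds_iff.1
    (Filter.inter_mem (Filter.inter_mem ht₁ ht₂) (hW.mem_nhds hxW))
  set δ : ℝ := min (ε/2) r with hδdef
  have hδ0 : 0 < δ := lt_min (by linarith) hr
  have hδsub : closedBall x δ ⊆ t₁ ∩ t₂ ∩ W := by
    refine subset_trans ?_ hεsub
    refine subset_trans (closedBall_subset_ball ?_) (ball_subset_ball (le_refl ε))
    calc δ ≤ ε/2 := min_le_left _ _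
      _ < ε := by linarith
  have hδW : closedBall x δ ⊆ W := fun z hz => (hδsub hz).2
  have hδt₁ : closedBall x δ ⊆ t₁ := fun z hz => (hδsub hz).1.1
  have hδt₂ : closedBall x δ ⊆ t₂ := fun z hz => (hδsub hz).1.2
  have hδr : δ ≤ r := min_le_right _ _
  have hxδ : x ∈ closedBall x δ := mem_closedBall_self hδ0.le
  -- Taylor estimates
  have hT1 : ∀ y ∈ closedBall x δ, ‖u y - u x - fderiv ℝ u x (y - x)‖ ≤ (K₁:ℝ) * ‖y - x‖ ^ 2 := by
    intro y hy
    refine taylor_bound' u x δ K₁ (fun z hz => hdiff z (hδW hz)) ?_ y hy K₁.2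
    intro z hz
    have := hlip₁.dist_le_mul z (hδt₁ hz) x (hδt₁ hxδ)
    rwa [dist_eq_norm, dist_eq_norm] at this
  set H := fderiv ℝ (fderiv ℝ u) x with hHdef
  clear_value H
  have hT2 : ∀ y ∈ closedBall x δ,
      ‖fderiv ℝ u y - fderiv ℝ u x - H (y - x)‖ ≤ (K₂:ℝ) * ‖y - x‖ ^ 2 := by
    intro y hy
    rw [hHdef]
    refine taylor_bound' (fderiv ℝ u) x δ K₂ (fun z hz => hdiff' z (hδW hz)) ?_ y hy K₂.2
    intro z hz
    have := hlip₂.dist_le_mul z (hδt₂ hz) x (hδt₂ hxδ)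
    rwa [dist_eq_norm, dist_eq_norm] at this
  -- reduce to a bound for each admissible direction
  refine le_csInf ?_ ?_
  · obtain ⟨v, hv1, hv2⟩ := hexv
    exact ⟨_, v, hv1, hv2, rfl⟩
  rintro b ⟨v, hv1, hv2, rfl⟩
  -- identify the second derivative value
  have hsnd : fderiv ℝ (fun y => fderiv ℝ u y v) x v = H v v := by
    rw [hHdef]
    have h1 : fderiv ℝ (fun y => fderiv ℝ u y v) x
        = (fderiv ℝ u x).comp (fderiv ℝ (fun _ => v) x)
          + (fderiv ℝ (fderiv ℝ u) x).flip v :=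
      fderiv_clm_apply (hdiff' x hxW) (differentiableAt_const v)
    rw [h1]
    simp
  rw [hsnd]
  -- setup constants
  set e : EuclideanSpace ℝ (Fin n) := ‖g‖⁻¹ • g with hedef
  clear_value e
  have hne : ‖e‖ = 1 := by
    rw [hedef, norm_smul, norm_inv, norm_norm, inv_mul_cancel₀ hG.ne']
  have hge : ⟪g, e⟫ = ‖g‖ := by
    rw [hedef, real_inner_smul_right, real_inner_self_eq_norm_mul_norm]
    field_simp
  have hve : ⟪v, e⟫ = 0 := by
    rw [hedef, real_inner_smul_right, hv2, mul_zero]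
  have hgv : ⟪g, v⟫ = 0 := by rw [real_inner_comm]; exact hv2
  set M : ℝ := (4*(K₁:ℝ)+1)/‖g‖ with hMdef
  have hM0 : 0 < M := by
    apply div_pos _ hG
    positivity
  have hMg : M * ‖g‖ = 4*(K₁:ℝ)+1 := div_mul_cancel₀ _ hG.ne'
  set K₃ : ℝ := 8*C + 8*(K₂:ℝ) + 3*‖H‖*M with hK₃def
  have hK₃0 : 0 ≤ K₃ := by
    have h1 : (0:ℝ) ≤ 8*C := by linarith
    have h2 : (0:ℝ) ≤ 8*(K₂:ℝ) := by positivity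
    have h3 : (0:ℝ) ≤ 3*‖H‖*M := by positivity
    rw [hK₃def]; linarith
  set t₀ : ℝ := min (min (δ/2) (r/2)) (1/(M+1)) with ht₀def
  have ht₀0 : 0 < t₀ := by
    apply lt_min (lt_min (by linarith) (by linarith))
    positivity
  -- key estimate
  have key : ∀ t : ℝ, 0 < t → t ≤ t₀ → H v v + a ≤ K₃ * t := by
    intro t ht ht0
    have htδ : 2*t ≤ δ := by
      have : t ≤ δ/2 := le_trans ht0 (le_trans (min_le_left _ _) (min_le_left _ _))
      linarith
    have htr : 2*t ≤ r := by
      have : t ≤ r/2 := le_trans ht0 (le_trans (min_le_left _ _) (min_le_right _ _))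
      linarith
    have hMt : M * t ≤ 1 := by
      have h1 : t ≤ 1/(M+1) := le_trans ht0 (min_le_right _ _)
      have h2 : M * t ≤ M * (1/(M+1)) := mul_le_mul_of_nonneg_left h1 hM0.le
      have h3 : M * (1/(M+1)) ≤ 1 := by
        rw [mul_one_div, div_le_one (by linarith)]; linarith
      linarith
    have hMt2 : M * t^2 ≤ t := by nlinarith
    have hMt2pos : 0 ≤ M * t^2 := by positivity
    -- points near x
    have hpt : ∀ s : ℝ, |s| ≤ M*t^2 → ‖(x + t•v + s•e) - x‖ ≤ 2*t := by
      intro s hs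
      have h1 : (x + t•v + s•e) - x = t•v + s•e := by abel
      rw [h1]
      calc ‖t•v + s•e‖ ≤ ‖t•v‖ + ‖s•e‖ := norm_add_le _ _
        _ = |t| + |s| := by rw [norm_smul, norm_smul, hv1, hne, Real.norm_eq_abs,
            Real.norm_eq_abs, mul_one, mul_one]
        _ ≤ t + M*t^2 := by
            rw [abs_of_pos ht]; linarith
        _ ≤ 2*t := by linarith
    have hptδ : ∀ s : ℝ, |s| ≤ M*t^2 → (x + t•v + s•e) ∈ closedBall x δ := by
      intro s hs
      rw [mem_closedBall, dist_eq_norm]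
      exact le_trans (hpt s hs) htδ
    -- the function along the level direction
    have hcont : ContinuousOn (fun s : ℝ => u (x + t•v + s•e)) (Set.Icc (-(M*t^2)) (M*t^2)) := by
      apply ContinuousOn.comp (hu.continuousOn)
        (Continuous.continuousOn (by continuity))
      intro s hs
      have habs : |s| ≤ M*t^2 := abs_le.2 ⟨by linarith [hs.1], hs.2⟩
      exact hδW (hptδ s habs)
    -- values at endpoints via Taylor
    have hlin : ∀ s : ℝ, fderiv ℝ u x (t•v + s•e) = s * ‖g‖ := by
      intro s
      rw [map_add, map_smul, map_smul, ← hbridge, ← hbridge, hgdef]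
      rw [← hgdef, hgv, hge]
      simp
    have hendpt : ∀ s : ℝ, |s| ≤ M*t^2 →
        |u (x + t•v + s•e) - u x - s*‖g‖| ≤ 4*(K₁:ℝ)*t^2 := by
      intro s hs
      have hy := hT1 _ (hptδ s hs)
      have h1 : (x + t•v + s•e) - x = t•v + s•e := by abel
      rw [h1, hlin s] at hy
      have h2 : ‖(x + t•v + s•e) - x‖ ≤ 2*t := hpt s hs
      rw [h1] at h2
      have h3 : (K₁:ℝ) * ‖t•v + s•e‖^2 ≤ (K₁:ℝ)*(2*t)^2 := by
        apply mul_le_mul_of_nonneg_left _ K₁.2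
        exact pow_le_pow_left₀ (norm_nonneg _) h2 2
      rw [Real.norm_eq_abs] at hy
      calc |u (x + t•v + s•e) - u x - s*‖g‖| ≤ (K₁:ℝ) * ‖t•v + s•e‖^2 := hy
        _ ≤ (K₁:ℝ)*(2*t)^2 := h3
        _ = 4*(K₁:ℝ)*t^2 := by ring
    have hψpos : u x ≤ u (x + t•v + (M*t^2)•e) := by
      have h := abs_le.1 (hendpt (M*t^2) (by rw [abs_of_nonneg hMt2pos]))
      have hval : (M*t^2)*‖g‖ = 4*(K₁:ℝ)*t^2 + t^2 := by
        calc (M*t^2)*‖g‖ = (M*‖g‖)*t^2 := by ring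
          _ = (4*(K₁:ℝ)+1)*t^2 := by rw [hMg]
          _ = 4*(K₁:ℝ)*t^2 + t^2 := by ring
      linarith [h.1, hval, sq_nonneg t]
    have hψneg : u (x + t•v + (-(M*t^2))•e) ≤ u x := by
      have h := abs_le.1 (hendpt (-(M*t^2)) (by rw [abs_neg, abs_of_nonneg hMt2pos]))
      have hval : (M*t^2)*‖g‖ = 4*(K₁:ℝ)*t^2 + t^2 := by
        calc (M*t^2)*‖g‖ = (M*‖g‖)*t^2 := by ring
          _ = (4*(K₁:ℝ)+1)*t^2 := by rw [hMg]
          _ = 4*(K₁:ℝ)*t^2 + t^2 := by ring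
      linarith [h.2, hval, sq_nonneg t]
    -- intermediate value theorem
    obtain ⟨s, hsmem, hψs⟩ := intermediate_value_Icc (neg_le_self hMt2pos) hcont
      (Set.mem_Icc.2 ⟨hψneg, hψpos⟩)
    have hs_abs : |s| ≤ M*t^2 := abs_le.2 ⟨by linarith [hsmem.1], hsmem.2⟩
    have huy : u (x + t•v + s•e) = u x := hψs
    -- the point on the level set
    have hyx : (x + t•v + s•e) - x = t•v + s•e := by abel
    have hyup : ‖(x + t•v + s•e) - x‖ ≤ 2*t := hpt s hs_abs
    have hylo : t ≤ ‖(x + t•v + s•e) - x‖ := by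
      have h1 : ⟪(x + t•v + s•e) - x, v⟫ = t := by
        rw [hyx, inner_add_left, real_inner_smul_left, real_inner_smul_left,
          real_inner_self_eq_norm_mul_norm, hv1, real_inner_comm, hve]
        ring
      calc t = ⟪(x + t•v + s•e) - x, v⟫ := h1.symm
        _ ≤ ‖(x + t•v + s•e) - x‖ * ‖v‖ := real_inner_le_norm _ _
        _ = ‖(x + t•v + s•e) - x‖ := by rw [hv1, mul_one]
    have hy0 : (0:ℝ) ≤ ‖(x + t•v + s•e) - x‖ := norm_nonneg _
    -- apply the hypothesis
    have hhyp := hyp (x + t•v + s•e) (le_trans hyup htr) huy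
    have hinner : ⟪gradient u (x + t•v + s•e) - g, (x + t•v + s•e) - x⟫
        = fderiv ℝ u (x + t•v + s•e) ((x + t•v + s•e) - x)
          - fderiv ℝ u x ((x + t•v + s•e) - x) := by
      rw [inner_sub_left, hbridge, hgdef, hbridge]
    rw [hinner] at hhyp
    -- second-order Taylor of the gradient
    have hT2y := hT2 (x + t•v + s•e) (by rw [mem_closedBall, dist_eq_norm]; linarith)
    have hT2y' : |fderiv ℝ u (x + t•v + s•e) ((x + t•v + s•e) - x)
        - fderiv ℝ u x ((x + t•v + s•e) - x) - H ((x + t•v + s•e) - x) ((x + t•v + s•e) - x)|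
        ≤ (K₂:ℝ) * ‖(x + t•v + s•e) - x‖^3 := by
      have happ : (fderiv ℝ u (x + t•v + s•e) - fderiv ℝ u x - H ((x + t•v + s•e) - x))
            ((x + t•v + s•e) - x)
          = fderiv ℝ u (x + t•v + s•e) ((x + t•v + s•e) - x)
            - fderiv ℝ u x ((x + t•v + s•e) - x)
            - H ((x + t•v + s•e) - x) ((x + t•v + s•e) - x) := by
        simp [ContinuousLinearMap.sub_apply]
      rw [← happ]
      calc |(fderiv ℝ u (x + t•v + s•e) - fderiv ℝ u x - H ((x + t•v + s•e) - x))
            ((x + t•v + s•e) - x)|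
          ≤ ‖fderiv ℝ u (x + t•v + s•e) - fderiv ℝ u x - H ((x + t•v + s•e) - x)‖
            * ‖(x + t•v + s•e) - x‖ := by
            rw [← Real.norm_eq_abs]
            exact ContinuousLinearMap.le_opNorm _ _
        _ ≤ (K₂:ℝ) * ‖(x + t•v + s•e) - x‖^2 * ‖(x + t•v + s•e) - x‖ :=
            mul_le_mul_of_nonneg_right hT2y hy0
        _ = (K₂:ℝ) * ‖(x + t•v + s•e) - x‖^3 := by ring
    -- expand the Hessian term
    have hHexp : H ((x + t•v + s•e) - x) ((x + t•v + s•e) - x)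
        = t^2 * H v v + (t*s) * (H v e) + (s*t) * (H e v) + s^2 * (H e e) := by
      rw [hyx, map_add, map_smul, map_smul]
      simp only [ContinuousLinearMap.add_apply, ContinuousLinearMap.coe_smul',
        Pi.smul_apply, map_add, map_smul, smul_eq_mul]
      ring
    have hHve : |H v e| ≤ ‖H‖ := by
      have h := H.le_opNorm₂ v e
      rw [hv1, hne, Real.norm_eq_abs] at h
      simpa using h
    have hHev : |H e v| ≤ ‖H‖ := by
      have h := H.le_opNorm₂ e v
      rw [hv1, hne, Real.norm_eq_abs] at h
      simpa using h
    have hHee : |H e e| ≤ ‖H‖ := by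
      have h := H.le_opNorm₂ e e
      rw [hne, Real.norm_eq_abs] at h
      simpa using h
    rw [hK₃def]
    exact arith_key t s ‖(x + t•v + s•e) - x‖ a C (K₂:ℝ) ‖H‖ M (H v v) (H v e) (H e v)
      (H e e) (H ((x + t•v + s•e) - x) ((x + t•v + s•e) - x))
      (fderiv ℝ u (x + t•v + s•e) ((x + t•v + s•e) - x))
      (fderiv ℝ u x ((x + t•v + s•e) - x))
      ht hs_abs hMt hM0.le hylo hyup hC K₂.2 (norm_nonneg H) hhyp hT2y' hHexp
      hHve hHev hHee ha
  -- conclude by letting t → 0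
  by_contra hcon
  push_neg at hcon
  have hb : 0 < H v v + a := by linarith
  set b : ℝ := H v v + a with hbdef
  set t : ℝ := min t₀ (b/(2*(K₃+1))) with htdef
  have ht0 : 0 < t := lt_min ht₀0 (by positivity)
  have hkey := key t ht0 (min_le_left _ _)
  have h1 : t ≤ b/(2*(K₃+1)) := min_le_right _ _
  have h2 : K₃ * t ≤ K₃ * (b/(2*(K₃+1))) := mul_le_mul_of_nonneg_left h1 hK₃0
  have h3 : K₃ * (b/(2*(K₃+1))) < b := by
    rw [mul_div_assoc']
    rw [div_lt_iff₀ (by linarith)]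
    linarith [mul_nonneg hK₃0 hb.le, hb]
  exact absurd (lt_of_le_of_lt (le_trans hkey h2) h3) (lt_irrefl b)
end

section
/- Let $n \ge 2$, let $u$ be three times continuously differentiable on a neighborhood of $x \in \mathbb{R}^n$ with $Du(x) \ne 0$, and let $a > 0$. Suppose $\min \{ -v^{T} D^2u(x)\, v : v \in \mathbb{R}^n,\ |v| = 1,\ v \cdot Du(x) = 0 \} \ge a$, i.e. $|Du(x)|\,\kappa_1(x) \ge a$ where $\kappa_1(x)$ is the smallest principal curvature of the level set of $u$ through $x$. Then there exist constants $C \ge 0$ and $r > 0$ such that for every $y$ with $|y - x| \le r$ and $u(y) = u(x)$ one has $(Du(y) - Du(x)) \cdot (y - x) + a|y - x|^2 \le C|y - x|^3$. -/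
open scoped RealInnerProductSpace NNReal

/-- Second-order Taylor bound from a Lipschitz derivative. -/
lemma quad_taylor_bound {E F : Type*} [NormedAddCommGroup E] [NormedSpace ℝ E]
    [NormedAddCommGroup F] [NormedSpace ℝ F] {f : E → F} {K : ℝ≥0} {x y : E}
    (hdiff : ∀ z ∈ Metric.closedBall x ‖y - x‖, DifferentiableAt ℝ f z)
    (hlip : LipschitzOnWith K (fderiv ℝ f) (Metric.closedBall x ‖y - x‖)) :
    ‖f y - f x - fderiv ℝ f x (y - x)‖ ≤ K * ‖y - x‖ * ‖y - x‖ := by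
  set s := Metric.closedBall x ‖y - x‖ with hs
  have hx : x ∈ s := Metric.mem_closedBall_self (norm_nonneg _)
  have hy : y ∈ s := by simp [hs, Metric.mem_closedBall, dist_eq_norm]
  have key := (convex_closedBall x ‖y - x‖).norm_image_sub_le_of_norm_hasFDerivWithin_le
    (f := fun z => f z - fderiv ℝ f x z)
    (f' := fun z => fderiv ℝ f z - fderiv ℝ f x)
    (fun z hz => (((hdiff z hz).hasFDerivAt).sub (fderiv ℝ f x).hasFDerivAt).hasFDerivWithinAt)
    (fun z hz => by
      have h1 : dist (fderiv ℝ f z) (fderiv ℝ f x) ≤ K * dist z x := hlip.dist_le_mul z hz x hx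
      have h2 : dist z x ≤ ‖y - x‖ := hz
      calc ‖fderiv ℝ f z - fderiv ℝ f x‖ = dist (fderiv ℝ f z) (fderiv ℝ f x) :=
            (dist_eq_norm _ _).symm
        _ ≤ K * dist z x := h1
        _ ≤ K * ‖y - x‖ := by nlinarith [dist_nonneg (x := z) (y := x), K.coe_nonneg])
    hx hy
  have heq : (fun z => f z - fderiv ℝ f x z) y - (fun z => f z - fderiv ℝ f x z) x
      = f y - f x - fderiv ℝ f x (y - x) := by
    simp only [map_sub]; abel
  rw [heq] at key
  linarith [key]

set_option maxHeartbeats 1000000 in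
/-- If `u` is `C³` near `x` with `Du(x) ≠ 0`, `a > 0`, and
`min { -vᵀ D²u(x) v : |v| = 1, v ⊥ Du(x) } ≥ a` (i.e. `|Du(x)| κ₁(x) ≥ a`), then there exist
`C ≥ 0` and `r > 0` such that `(Du(y) - Du(x))·(y - x) + a|y-x|² ≤ C|y-x|³` for every `y` with
`|y - x| ≤ r` lying on the level set of `u` through `x`. -/
theorem two_point_estimate_of_curvature_lower_bound
    {n : ℕ} (hn : 2 ≤ n)
    (u : EuclideanSpace ℝ (Fin n) → ℝ)
    (W : Set (EuclideanSpace ℝ (Fin n))) (hW : IsOpen W)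
    (x : EuclideanSpace ℝ (Fin n)) (hxW : x ∈ W)
    (hu : ContDiffOn ℝ 3 u W)
    (hgrad : gradient u x ≠ 0)
    (a : ℝ) (ha : 0 < a)
    (hcurv : a ≤ sInf {s : ℝ | ∃ v : EuclideanSpace ℝ (Fin n), ‖v‖ = 1 ∧
      ⟪v, gradient u x⟫ = 0 ∧ s = -(fderiv ℝ (fun y => fderiv ℝ u y v) x v)}) :
    ∃ C r : ℝ, 0 ≤ C ∧ 0 < r ∧ Metric.closedBall x r ⊆ W ∧
      ∀ y, ‖y - x‖ ≤ r → u y = u x →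
        ⟪gradient u y - gradient u x, y - x⟫ + a * ‖y - x‖ ^ 2 ≤ C * ‖y - x‖ ^ 3 := by
  classical
  -- fderiv u is C² on W, gradient u is C² on W
  have hfd2 : ContDiffOn ℝ 2 (fderiv ℝ u) W := hu.fderiv_of_isOpen (m := 2) hW (by norm_num)
  have hGeq : gradient u = fun y => (InnerProductSpace.toDual ℝ (EuclideanSpace ℝ (Fin n))).symm (fderiv ℝ u y) := rfl
  have hG2 : ContDiffOn ℝ 2 (gradient u) W := by
    rw [hGeq]
    exact ((InnerProductSpace.toDual ℝ (EuclideanSpace ℝ (Fin n))).symm.contDiff).comp_contDiffOn hfd2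
  -- gradient u is differentiable on W
  have hGdiff : ∀ z ∈ W, DifferentiableAt ℝ (gradient u) z := fun z hz =>
    (hG2.contDiffAt (hW.mem_nhds hz)).differentiableAt (by norm_num)
  have hudiff : ∀ z ∈ W, DifferentiableAt ℝ u z := fun z hz =>
    (hu.contDiffAt (hW.mem_nhds hz)).differentiableAt (by norm_num)
  set H := fderiv ℝ (gradient u) x with hH
  set g := gradient u x with hg
  -- key identity : Hessian applied
  have key : ∀ v w : EuclideanSpace ℝ (Fin n), fderiv ℝ (fun y => fderiv ℝ u y v) x w = ⟪H w, v⟫ := by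
    intro v w
    have h1 : HasFDerivAt (gradient u) H x := (hGdiff x hxW).hasFDerivAt
    have h2 : HasFDerivAt (fun y => ⟪v, gradient u y⟫)
        ((innerSL ℝ v).comp H) x := ((innerSL ℝ v).hasFDerivAt).comp x h1
    have h3 : (fun y => fderiv ℝ u y v) = fun y => ⟪v, gradient u y⟫ := by
      funext y
      rw [real_inner_comm]
      exact (InnerProductSpace.toDual_symm_apply (𝕜 := ℝ)).symm
    rw [h3, h2.fderiv]
    simp only [ContinuousLinearMap.coe_comp', Function.comp_apply, innerSL_apply_apply]
    exact real_inner_comm _ _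
  -- the set S is bounded below
  set S := {s : ℝ | ∃ v : EuclideanSpace ℝ (Fin n), ‖v‖ = 1 ∧ ⟪v, g⟫ = 0 ∧
      s = -(fderiv ℝ (fun y => fderiv ℝ u y v) x v)} with hS
  have hSbdd : BddBelow S := by
    refine ⟨-‖H‖, fun s hs => ?_⟩
    obtain ⟨v, hv1, -, hv3⟩ := hs
    rw [hv3, key]
    have h1 := abs_real_inner_le_norm (H v) v
    have h2 := H.le_opNorm v
    rw [hv1, mul_one] at h1 h2
    linarith [le_abs_self (⟪H v, v⟫ : ℝ)]
  -- curvature bound : for unit v ⊥ g, ⟪H v, v⟫ ≤ -a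
  have hcurv' : ∀ v : EuclideanSpace ℝ (Fin n), ‖v‖ = 1 → ⟪v, g⟫ = 0 → ⟪H v, v⟫ ≤ -a := by
    intro v hv1 hv2
    have hmem : -(fderiv ℝ (fun y => fderiv ℝ u y v) x v) ∈ S := ⟨v, hv1, hv2, rfl⟩
    have := le_trans hcurv (csInf_le hSbdd hmem)
    rw [key] at this
    linarith
  -- quadratic bound for unit-sphere-orthogonal vectors, scaled
  have hcurvScaled : ∀ p : EuclideanSpace ℝ (Fin n), ⟪p, g⟫ = 0 → ⟪H p, p⟫ ≤ -a * ‖p‖ ^ 2 := by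
    intro p hp
    rcases eq_or_ne p 0 with rfl | hp0
    · simp
    · have hpn : (0:ℝ) < ‖p‖ := norm_pos_iff.2 hp0
      have hv1 : ‖(‖p‖⁻¹ • p : EuclideanSpace ℝ (Fin n))‖ = 1 := by
        rw [norm_smul]; simp [abs_of_pos hpn, inv_mul_cancel₀ hpn.ne']
      have hv2 : ⟪(‖p‖⁻¹ • p : EuclideanSpace ℝ (Fin n)), g⟫ = 0 := by
        rw [real_inner_smul_left, hp, mul_zero]
      have := hcurv' _ hv1 hv2
      rw [map_smul, real_inner_smul_left, real_inner_smul_right] at this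
      have h2 : ‖p‖⁻¹ * (‖p‖⁻¹ * ⟪H p, p⟫) ≤ -a := this
      have h3 : ⟪H p, p⟫ = ‖p‖ ^ 2 * (‖p‖⁻¹ * (‖p‖⁻¹ * ⟪H p, p⟫)) := by
        field_simp
      rw [h3]
      calc ‖p‖ ^ 2 * (‖p‖⁻¹ * (‖p‖⁻¹ * ⟪H p, p⟫)) ≤ ‖p‖ ^ 2 * (-a) := by
            apply mul_le_mul_of_nonneg_left h2 (by positivity)
        _ = -a * ‖p‖ ^ 2 := by ring
  -- Lipschitz bounds for fderiv u and fderiv (gradient u) near x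
  obtain ⟨K₁, t₁, ht₁, hlip₁⟩ : ∃ K : ℝ≥0, ∃ t ∈ nhds x, LipschitzOnWith K (fderiv ℝ u) t :=
    ((hfd2.contDiffAt (hW.mem_nhds hxW)).of_le (by norm_num)).exists_lipschitzOnWith
  have hDG1 : ContDiffOn ℝ 1 (fderiv ℝ (gradient u)) W := hG2.fderiv_of_isOpen (m := 1) hW (by norm_num)
  obtain ⟨K₂, t₂, ht₂, hlip₂⟩ : ∃ K : ℝ≥0, ∃ t ∈ nhds x,
      LipschitzOnWith K (fderiv ℝ (gradient u)) t :=
    (hDG1.contDiffAt (hW.mem_nhds hxW)).exists_lipschitzOnWith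
  -- choose r
  obtain ⟨r₀, hr₀, hball⟩ := Metric.nhds_basis_closedBall.mem_iff.1
    (Filter.inter_mem (Filter.inter_mem (hW.mem_nhds hxW) ht₁) ht₂)
  set r := min r₀ 1 with hr
  have hrpos : 0 < r := lt_min hr₀ one_pos
  have hrW : Metric.closedBall x r ⊆ W := fun z hz =>
    (hball (Metric.closedBall_subset_closedBall (min_le_left _ _) hz)).1.1
  have hrt₁ : Metric.closedBall x r ⊆ t₁ := fun z hz =>
    (hball (Metric.closedBall_subset_closedBall (min_le_left _ _) hz)).1.2
  have hrt₂ : Metric.closedBall x r ⊆ t₂ := fun z hz =>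
    hball (Metric.closedBall_subset_closedBall (min_le_left _ _) hz)|>.2
  have hgn : (0:ℝ) < ‖g‖ := norm_pos_iff.2 hgrad
  set c : ℝ := K₁ / ‖g‖ with hc
  have hc0 : 0 ≤ c := div_nonneg K₁.coe_nonneg hgn.le
  refine ⟨K₂ + ‖H‖ * (2 * c + c ^ 2) + a * c ^ 2, r, by positivity, hrpos, hrW, ?_⟩
  intro y hyr hyu
  set w : EuclideanSpace ℝ (Fin n) := y - x with hw
  have hwr : ‖w‖ ≤ r := hyr
  have hw1 : ‖w‖ ≤ 1 := le_trans hwr (min_le_right _ _)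
  have hsub : Metric.closedBall x ‖w‖ ⊆ Metric.closedBall x r :=
    Metric.closedBall_subset_closedBall hwr
  -- Taylor bounds
  have hA : ‖u y - u x - fderiv ℝ u x w‖ ≤ K₁ * ‖w‖ * ‖w‖ :=
    quad_taylor_bound (fun z hz => hudiff z (hrW (hsub hz)))
      (hlip₁.mono (fun z hz => hrt₁ (hsub hz)))
  have hB : ‖gradient u y - gradient u x - H w‖ ≤ K₂ * ‖w‖ * ‖w‖ :=
    quad_taylor_bound (fun z hz => hGdiff z (hrW (hsub hz)))
      (hlip₂.mono (fun z hz => hrt₂ (hsub hz)))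
  -- ⟪g, w⟫ is small
  have hfg : fderiv ℝ u x w = ⟪g, w⟫ :=
    (InnerProductSpace.toDual_symm_apply (𝕜 := ℝ) (E := EuclideanSpace ℝ (Fin n))).symm
  have hgw : |⟪g, w⟫| ≤ K₁ * ‖w‖ * ‖w‖ := by
    rw [hyu] at hA
    simp only [sub_self, zero_sub, norm_neg, hfg] at hA
    rwa [Real.norm_eq_abs] at hA
  -- orthogonal decomposition
  set τ : ℝ := ⟪g, w⟫ / ‖g‖ ^ 2 with hτ
  set wpar : EuclideanSpace ℝ (Fin n) := τ • g with hwpar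
  set wperp : EuclideanSpace ℝ (Fin n) := w - wpar with hwperp
  have hdecomp : w = wperp + wpar := by rw [hwperp]; abel
  have hperp : ⟪wperp, g⟫ = 0 := by
    rw [hwperp, inner_sub_left, hwpar, real_inner_smul_left, hτ,
      real_inner_self_eq_norm_sq, real_inner_comm]
    field_simp
    ring
  have hparnorm : ‖wpar‖ ≤ c * ‖w‖ ^ 2 := by
    have h0 : ‖wpar‖ = |⟪g, w⟫| / ‖g‖ := by
      rw [hwpar, norm_smul, hτ, Real.norm_eq_abs, abs_div,
        abs_of_nonneg (by positivity : (0:ℝ) ≤ ‖g‖ ^ 2)]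
      field_simp
    have h1 : |⟪g, w⟫| ≤ ↑K₁ * ‖w‖ ^ 2 := by nlinarith [hgw]
    rw [h0, hc, div_mul_eq_mul_div]
    gcongr
  have hperpwpar : ⟪wperp, wpar⟫ = 0 := by
    rw [hwpar, real_inner_smul_right, hperp, mul_zero]
  have hpyth : ‖w‖ ^ 2 = ‖wperp‖ ^ 2 + ‖wpar‖ ^ 2 := by
    rw [hdecomp, @norm_add_sq_real, hperpwpar]; ring
  have hperpnorm : ‖wperp‖ ≤ ‖w‖ := by
    nlinarith [norm_nonneg wperp, norm_nonneg w, norm_nonneg wpar]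
  -- cross terms
  have hcross : ∀ p q : EuclideanSpace ℝ (Fin n), ⟪H p, q⟫ ≤ ‖H‖ * ‖p‖ * ‖q‖ := by
    intro p q
    calc ⟪H p, q⟫ ≤ ‖H p‖ * ‖q‖ := real_inner_le_norm _ _
      _ ≤ ‖H‖ * ‖p‖ * ‖q‖ := mul_le_mul_of_nonneg_right (H.le_opNorm p) (norm_nonneg q)
  have hHww : ⟪H w, w⟫ = ⟪H wperp, wperp⟫ + ⟪H wperp, wpar⟫ + ⟪H wpar, wperp⟫
      + ⟪H wpar, wpar⟫ := by
    rw [hdecomp, map_add, inner_add_left, inner_add_right, inner_add_right]; ring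
  -- main chain
  have hmain : ⟪gradient u y - gradient u x, w⟫
      = ⟪gradient u y - gradient u x - H w, w⟫ + ⟪H w, w⟫ := by
    simp only [inner_sub_left]; ring
  have h1 : ⟪gradient u y - gradient u x - H w, w⟫ ≤ K₂ * ‖w‖ ^ 3 := by
    calc ⟪gradient u y - gradient u x - H w, w⟫
        ≤ ‖gradient u y - gradient u x - H w‖ * ‖w‖ := real_inner_le_norm _ _
      _ ≤ K₂ * ‖w‖ * ‖w‖ * ‖w‖ := mul_le_mul_of_nonneg_right hB (norm_nonneg w)
      _ = K₂ * ‖w‖ ^ 3 := by ring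
  have h2 : ⟪H wperp, wperp⟫ ≤ -a * ‖wperp‖ ^ 2 := hcurvScaled wperp hperp
  have hHn : (0:ℝ) ≤ ‖H‖ := norm_nonneg H
  have hwn : (0:ℝ) ≤ ‖w‖ := norm_nonneg w
  have hparn : (0:ℝ) ≤ ‖wpar‖ := norm_nonneg wpar
  have hperpn : (0:ℝ) ≤ ‖wperp‖ := norm_nonneg wperp
  have p1 : ‖wperp‖ * ‖wpar‖ ≤ ‖w‖ * (c * ‖w‖ ^ 2) := mul_le_mul hperpnorm hparnorm hparn hwn
  have p2 : ‖wpar‖ * ‖wpar‖ ≤ (c * ‖w‖ ^ 2) * (c * ‖w‖ ^ 2) :=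
    mul_le_mul hparnorm hparnorm hparn (by positivity)
  have b3 : ⟪H wperp, wpar⟫ ≤ ‖H‖ * c * ‖w‖ ^ 3 := by
    calc ⟪H wperp, wpar⟫ ≤ ‖H‖ * ‖wperp‖ * ‖wpar‖ := hcross _ _
      _ = ‖H‖ * (‖wperp‖ * ‖wpar‖) := by ring
      _ ≤ ‖H‖ * (‖w‖ * (c * ‖w‖ ^ 2)) := mul_le_mul_of_nonneg_left p1 hHn
      _ = ‖H‖ * c * ‖w‖ ^ 3 := by ring
  have b4 : ⟪H wpar, wperp⟫ ≤ ‖H‖ * c * ‖w‖ ^ 3 := by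
    calc ⟪H wpar, wperp⟫ ≤ ‖H‖ * ‖wpar‖ * ‖wperp‖ := hcross _ _
      _ = ‖H‖ * (‖wperp‖ * ‖wpar‖) := by ring
      _ ≤ ‖H‖ * (‖w‖ * (c * ‖w‖ ^ 2)) := mul_le_mul_of_nonneg_left p1 hHn
      _ = ‖H‖ * c * ‖w‖ ^ 3 := by ring
  have b5 : ⟪H wpar, wpar⟫ ≤ ‖H‖ * c ^ 2 * ‖w‖ ^ 4 := by
    calc ⟪H wpar, wpar⟫ ≤ ‖H‖ * ‖wpar‖ * ‖wpar‖ := hcross _ _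
      _ = ‖H‖ * (‖wpar‖ * ‖wpar‖) := by ring
      _ ≤ ‖H‖ * ((c * ‖w‖ ^ 2) * (c * ‖w‖ ^ 2)) := mul_le_mul_of_nonneg_left p2 hHn
      _ = ‖H‖ * c ^ 2 * ‖w‖ ^ 4 := by ring
  have aR : a * ‖wpar‖ ^ 2 ≤ a * (c ^ 2 * ‖w‖ ^ 4) := by
    apply mul_le_mul_of_nonneg_left _ ha.le
    calc ‖wpar‖ ^ 2 = ‖wpar‖ * ‖wpar‖ := sq ‖wpar‖
      _ ≤ (c * ‖w‖ ^ 2) * (c * ‖w‖ ^ 2) := p2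
      _ = c ^ 2 * ‖w‖ ^ 4 := by ring
  have e2 : ‖w‖ ^ 4 ≤ ‖w‖ ^ 3 :=
    pow_le_pow_of_le_one hwn hw1 (by norm_num)
  have e3 : (‖H‖ * c ^ 2 + a * c ^ 2) * ‖w‖ ^ 4 ≤ (‖H‖ * c ^ 2 + a * c ^ 2) * ‖w‖ ^ 3 :=
    mul_le_mul_of_nonneg_left e2 (by positivity)
  rw [hmain, hHww, hpyth]
  nlinarith [h1, h2, b3, b4, b5, aR, e3]
end
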